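/- Let S be a set, f : Set S → Set S monotone, and let 𝒲 be a family of subsets of S each of which is well-supported for f (i.e. each W ∈ 𝒲 admits a well-founded support ordering). Then ⋃𝒲 is well-supported for f. -/

import Mathlib

/-- `(X, r)` is a support ordering for `f`. -/
def IsSupportOrdering {S : Type*} (f : Set S → Set S) (X : Set S) (r : S → S → Prop) : Prop :=
  ∀ x ∈ X, x ∈ f {x' ∈ X | r x' x}

/-- `X` is well-supported for `f`: it admits a well-founded support ordering. -/
def IsWellSupported {S : Type*} (f : Set S → Set S) (X : Set S) : Prop :=
  ∃ r : S → S → Prop,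
    (∀ x y, r x y → x ∈ X ∧ y ∈ X) ∧ WellFounded r ∧ IsSupportOrdering f X r

theorem sUnion_wellSupported {S : Type*} (f : Set S → Set S) (hf : Monotone f)
    (W : Set (Set S)) (hW : ∀ A ∈ W, IsWellSupported f A) :
    IsWellSupported f (⋃₀ W) := by
  classical
  choose rel hdom hwf hsupp using hW
  set rel' : Set S → S → S → Prop :=
    fun A => if h : A ∈ W then rel A h else fun _ _ => False with hrel'
  have hwf' : ∀ A, WellFounded (rel' A) := by
    intro A
    by_cases h : A ∈ W
    · simpa [hrel', h] using hwf A h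
    · simp only [hrel', h, dif_neg, not_false_iff]
      exact ⟨fun a => Acc.intro a fun y hy => hy.elim⟩
  set wo : Set S → Set S → Prop := WellOrderingRel with hwo
  have wfwo : WellFounded wo := (IsWellFounded.wf : WellFounded (@WellOrderingRel (Set S)))
  have hne : ∀ x : S, x ∈ ⋃₀ W → {A : Set S | A ∈ W ∧ x ∈ A}.Nonempty := by
    intro x hx
    obtain ⟨A, hA, hxA⟩ := hx
    exact ⟨A, hA, hxA⟩
  set idx : S → Set S := fun x =>
    if h : x ∈ ⋃₀ W then wfwo.min {A : Set S | A ∈ W ∧ x ∈ A} (hne x h) else ∅ with hidx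
  have hidx_mem : ∀ x (hx : x ∈ ⋃₀ W), idx x ∈ W ∧ x ∈ idx x := by
    intro x hx
    have := wfwo.min_mem {A : Set S | A ∈ W ∧ x ∈ A} (hne x hx)
    simpa only [hidx, dif_pos hx, Set.mem_setOf_eq] using this
  have hidx_min : ∀ x (hx : x ∈ ⋃₀ W) (B : Set S), B ∈ W → x ∈ B → ¬ wo B (idx x) := by
    intro x hx B hB hxB
    have := wfwo.not_lt_min {A : Set S | A ∈ W ∧ x ∈ A} (show B ∈ {A : Set S | A ∈ W ∧ x ∈ A} from ⟨hB, hxB⟩)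
    simpa only [hidx, dif_pos hx] using this
  refine ⟨fun x y => x ∈ ⋃₀ W ∧ y ∈ ⋃₀ W ∧
      (wo (idx x) (idx y) ∨ (idx x = idx y ∧ rel' (idx y) x y)), ?_, ?_, ?_⟩
  · intro x y h; exact ⟨h.1, h.2.1⟩
  · have hlex : WellFounded (@PSigma.Lex (Set S) (fun _ => S) wo (fun A => rel' A)) :=
      WellFounded.psigma_lex wfwo hwf'
    apply Subrelation.wf
      (r := InvImage (@PSigma.Lex (Set S) (fun _ => S) wo (fun A => rel' A))
        (fun x => ⟨idx x, x⟩))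
    · rintro x y ⟨hx, hy, h | ⟨heq, hr⟩⟩
      · exact PSigma.Lex.left _ _ h
      · show PSigma.Lex wo (fun A => rel' A) ⟨idx x, x⟩ ⟨idx y, y⟩
        rw [show (⟨idx x, x⟩ : Σ' _ : Set S, S) = ⟨idx y, x⟩ from by rw [heq]]
        exact PSigma.Lex.right (idx y) hr
    · exact InvImage.wf _ hlex
  · intro x hx
    obtain ⟨hAW, hxA⟩ := hidx_mem x hx
    have hx' : x ∈ f {x' ∈ idx x | rel' (idx x) x' x} := by
      have := hsupp (idx x) hAW x hxA
      simpa [hrel', dif_pos hAW] using this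
    refine hf ?_ hx'
    rintro x' ⟨hx'A, hr⟩
    have hx'U : x' ∈ ⋃₀ W := ⟨idx x, hAW, hx'A⟩
    refine ⟨hx'U, hx'U, hx, ?_⟩
    rcases trichotomous_of wo (idx x') (idx x) with h | h | h
    · exact Or.inl h
    · exact Or.inr ⟨h, by rwa [← h] at hr ⊢⟩
    · exact absurd h (hidx_min x' hx'U (idx x) hAW hx'A)
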